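/- Crystallization (q → 0 limit) of the q-Littelmann operators: let π ∈ C₀([0,T],V), α a linear form on V, α^∨ ∈ V with α(α^∨) = 2, and c ∈ ℝ. Then (a) lim_{q→0⁺} q·log ∫₀^T e^{−α(π(s))/q} ds = −inf_{0≤s≤T} α(π(s)); and (b) for every t with 0 < t < T, the path (e_{α,q}^c·π)(t) = π(t) + q·log(1 + ((e^{c/q} − 1)/∫₀^T e^{−α(π(s))/q} ds)·∫₀^t e^{−α(π(s))/q} ds)·α^∨ converges as q → 0⁺ to π(t) + (inf_{0≤s≤T} α(π(s)) − min(inf_{0≤s≤t} α(π(s)) − c, inf_{t≤s≤T} α(π(s))))·α^∨. -/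

import Mathlib

open MeasureTheory Filter Topology

lemma expCont {f : ℝ → ℝ} {a b q : ℝ} (hf : ContinuousOn f (Set.Icc a b)) :
    ContinuousOn (fun s => Real.exp (-f s / q)) (Set.Icc a b) :=
  (Real.continuous_exp.comp_continuousOn ((hf.neg).div_const q))

lemma expInt {f : ℝ → ℝ} {a b q : ℝ} (hab : a ≤ b) (hf : ContinuousOn f (Set.Icc a b)) :
    IntervalIntegrable (fun s => Real.exp (-f s / q)) volume a b := by
  apply ContinuousOn.intervalIntegrable
  rw [Set.uIcc_of_le hab]
  exact expCont hf

lemma lapPos {f : ℝ → ℝ} {a b q : ℝ} (hab : a < b) (hf : ContinuousOn f (Set.Icc a b)) :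
    0 < ∫ s in a..b, Real.exp (-f s / q) := by
  apply intervalIntegral.intervalIntegral_pos_of_pos_on (expInt hab.le hf)
  · intro x _; positivity
  · exact hab

lemma laplace {f : ℝ → ℝ} {a b : ℝ} (hab : a < b) (hf : ContinuousOn f (Set.Icc a b)) :
    Tendsto (fun q : ℝ => q * Real.log (∫ s in a..b, Real.exp (-f s / q)))
      (𝓝[>] 0) (𝓝 (-sInf (f '' Set.Icc a b))) := by
  obtain ⟨x₀, hx₀, hmin'⟩ := isCompact_Icc.exists_isMinOn ⟨a, Set.left_mem_Icc.2 hab.le⟩ hf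
  have hmin : ∀ s ∈ Set.Icc a b, f x₀ ≤ f s := fun s hs => hmin' hs
  have hbdd : BddBelow (f '' Set.Icc a b) :=
    ⟨f x₀, fun y hy => by obtain ⟨s, hs, rfl⟩ := hy; exact hmin s hs⟩
  have hm : sInf (f '' Set.Icc a b) = f x₀ := by
    apply le_antisymm (csInf_le hbdd ⟨x₀, hx₀, rfl⟩)
    exact le_csInf ⟨f x₀, ⟨x₀, hx₀, rfl⟩⟩ (fun y hy => by obtain ⟨s, hs, rfl⟩ := hy; exact hmin s hs)
  rw [hm]
  set m := f x₀ with hmdef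
  have hid : Tendsto (fun q : ℝ => q) (𝓝[>] (0:ℝ)) (𝓝 0) :=
    tendsto_id.mono_left nhdsWithin_le_nhds
  rw [tendsto_order]
  constructor
  · -- lower bound
    intro l hl
    set ε : ℝ := (-m - l) / 2 with hε
    have hεpos : 0 < ε := by simp only [hε]; linarith
    obtain ⟨δ, hδpos, hδ⟩ := (Metric.continuousWithinAt_iff.1 (hf x₀ hx₀)) ε hεpos
    obtain ⟨hax, hxb⟩ := hx₀
    set u := max a (x₀ - δ/2) with hu
    set v := min b (x₀ + δ/2) with hv
    have hau : a ≤ u := le_max_left _ _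
    have hvb : v ≤ b := min_le_left _ _
    have huv : u < v := by
      apply max_lt <;> apply lt_min <;> linarith
    have hsmall : ∀ s ∈ Set.Icc u v, f s < m + ε := by
      intro s hs
      have h1 : x₀ - δ/2 ≤ s := le_trans (le_max_right _ _) hs.1
      have h2 : s ≤ x₀ + δ/2 := le_trans hs.2 (min_le_right _ _)
      have hsab : s ∈ Set.Icc a b := ⟨le_trans hau hs.1, le_trans hs.2 hvb⟩
      have := hδ hsab (by rw [Real.dist_eq, abs_lt]; constructor <;> linarith)
      rw [Real.dist_eq, abs_lt] at this
      linarith [this.1, this.2]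
    have haux : Tendsto (fun q : ℝ => q * Real.log (v - u) - (m + ε)) (𝓝[>] (0:ℝ))
        (𝓝 (-(m + ε))) := by
      have := (hid.mul_const (Real.log (v - u))).sub_const (m + ε)
      simpa using this
    have hev := haux.eventually_const_lt (show l < -(m+ε) by simp only [hε]; linarith)
    filter_upwards [self_mem_nhdsWithin, hev] with q hq hlt
    have hq : (0:ℝ) < q := hq
    have hcontuv : ContinuousOn f (Set.Icc u v) := hf.mono (Set.Icc_subset_Icc hau hvb)
    have hIuv : (v - u) * Real.exp (-(m+ε)/q) ≤ ∫ s in u..v, Real.exp (-f s / q) := by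
      have hmono := intervalIntegral.integral_mono_on (μ := volume) huv.le
        (intervalIntegrable_const (c := Real.exp (-(m+ε)/q))) (expInt huv.le hcontuv)
        (fun s hs => Real.exp_le_exp.2 (by
          have := hsmall s hs
          apply div_le_div_of_nonneg_right _ hq.le
          linarith))
      simpa [smul_eq_mul] using hmono
    have hsplit : (∫ s in u..v, Real.exp (-f s / q)) ≤ ∫ s in a..b, Real.exp (-f s / q) := by
      have i1 : IntervalIntegrable (fun s => Real.exp (-f s / q)) volume a u :=
        expInt hau (hf.mono (Set.Icc_subset_Icc le_rfl (le_trans huv.le hvb)))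
      have i2 : IntervalIntegrable (fun s => Real.exp (-f s / q)) volume u v :=
        expInt huv.le hcontuv
      have i3 : IntervalIntegrable (fun s => Real.exp (-f s / q)) volume v b :=
        expInt hvb (hf.mono (Set.Icc_subset_Icc (le_trans hau huv.le) le_rfl))
      have e1 := intervalIntegral.integral_add_adjacent_intervals i1 (i2.trans i3)
      have e2 := intervalIntegral.integral_add_adjacent_intervals i2 i3
      have n1 : 0 ≤ ∫ s in a..u, Real.exp (-f s / q) :=
        intervalIntegral.integral_nonneg hau (fun s _ => (Real.exp_pos _).le)
      have n3 : 0 ≤ ∫ s in v..b, Real.exp (-f s / q) :=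
        intervalIntegral.integral_nonneg hvb (fun s _ => (Real.exp_pos _).le)
      linarith [e1, e2]
    have hpos : (0:ℝ) < (v - u) * Real.exp (-(m+ε)/q) := by
      have : (0:ℝ) < v - u := by linarith
      positivity
    have hlog : q * Real.log (v - u) - (m + ε) ≤
        q * Real.log (∫ s in a..b, Real.exp (-f s / q)) := by
      have hle : Real.log ((v - u) * Real.exp (-(m+ε)/q)) ≤
          Real.log (∫ s in a..b, Real.exp (-f s / q)) :=
        Real.log_le_log hpos (le_trans hIuv hsplit)
      rw [Real.log_mul (by linarith : v - u ≠ 0) (Real.exp_ne_zero _), Real.log_exp] at hle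
      have := mul_le_mul_of_nonneg_left hle hq.le
      calc q * Real.log (v - u) - (m + ε)
          = q * (Real.log (v - u) + -(m+ε)/q) := by field_simp; ring
        _ ≤ _ := this
    linarith
  · -- upper bound
    intro w hw
    have haux : Tendsto (fun q : ℝ => q * Real.log (b - a) - m) (𝓝[>] (0:ℝ)) (𝓝 (-m)) := by
      have := (hid.mul_const (Real.log (b - a))).sub_const m
      simpa using this
    have hev := haux.eventually_lt_const hw
    filter_upwards [self_mem_nhdsWithin, hev] with q hq hlt
    have hq : (0:ℝ) < q := hq
    have key : (∫ s in a..b, Real.exp (-f s / q)) ≤ (b - a) * Real.exp (-m/q) := by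
      have hmono := intervalIntegral.integral_mono_on (μ := volume) hab.le
        (expInt hab.le hf) (intervalIntegrable_const (c := Real.exp (-m/q)))
        (fun s hs => Real.exp_le_exp.2 (by
          have := hmin s hs
          apply div_le_div_of_nonneg_right _ hq.le
          linarith))
      simpa [smul_eq_mul] using hmono
    have hlog : q * Real.log (∫ s in a..b, Real.exp (-f s / q)) ≤
        q * Real.log (b - a) - m := by
      have hle : Real.log (∫ s in a..b, Real.exp (-f s / q)) ≤
          Real.log ((b - a) * Real.exp (-m/q)) :=
        Real.log_le_log (lapPos hab hf) key
      rw [Real.log_mul (by linarith : b - a ≠ 0) (Real.exp_ne_zero _), Real.log_exp] at hle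
      have := mul_le_mul_of_nonneg_left hle hq.le
      calc q * Real.log (∫ s in a..b, Real.exp (-f s / q)) ≤
          q * (Real.log (b - a) + -m/q) := this
        _ = q * Real.log (b - a) - m := by field_simp; ring
    linarith

lemma qlog_add {X Y : ℝ → ℝ} {L1 L2 : ℝ}
    (hX : ∀ q : ℝ, 0 < q → 0 < X q) (hY : ∀ q : ℝ, 0 < q → 0 < Y q)
    (h1 : Tendsto (fun q => q * Real.log (X q)) (𝓝[>] 0) (𝓝 L1))
    (h2 : Tendsto (fun q => q * Real.log (Y q)) (𝓝[>] 0) (𝓝 L2)) :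
    Tendsto (fun q => q * Real.log (X q + Y q)) (𝓝[>] 0) (𝓝 (max L1 L2)) := by
  have hid : Tendsto (fun q : ℝ => q) (𝓝[>] (0:ℝ)) (𝓝 0) :=
    tendsto_id.mono_left nhdsWithin_le_nhds
  have hlo : Tendsto (fun q => max (q * Real.log (X q)) (q * Real.log (Y q)))
      (𝓝[>] (0:ℝ)) (𝓝 (max L1 L2)) := h1.max h2
  have hhi : Tendsto (fun q => q * Real.log 2 +
      max (q * Real.log (X q)) (q * Real.log (Y q))) (𝓝[>] (0:ℝ)) (𝓝 (max L1 L2)) := by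
    have := (hid.mul_const (Real.log 2)).add hlo
    simpa using this
  apply tendsto_of_tendsto_of_tendsto_of_le_of_le' hlo hhi
  · filter_upwards [self_mem_nhdsWithin] with q hq
    have hq : (0:ℝ) < q := hq
    have hx := hX q hq; have hy := hY q hq
    apply max_le
    · exact mul_le_mul_of_nonneg_left (Real.log_le_log hx (by linarith)) hq.le
    · exact mul_le_mul_of_nonneg_left (Real.log_le_log hy (by linarith)) hq.le
  · filter_upwards [self_mem_nhdsWithin] with q hq
    have hq : (0:ℝ) < q := hq
    have hx := hX q hq; have hy := hY q hq
    have hmaxpos : 0 < max (X q) (Y q) := lt_of_lt_of_le hx (le_max_left _ _)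
    have hmaxlog : q * Real.log (max (X q) (Y q))
        = max (q * Real.log (X q)) (q * Real.log (Y q)) := by
      rcases le_total (X q) (Y q) with h | h
      · rw [max_eq_right h,
          max_eq_right (mul_le_mul_of_nonneg_left (Real.log_le_log hx h) hq.le)]
      · rw [max_eq_left h,
          max_eq_left (mul_le_mul_of_nonneg_left (Real.log_le_log hy h) hq.le)]
    calc q * Real.log (X q + Y q)
        ≤ q * Real.log (2 * max (X q) (Y q)) := by
          apply mul_le_mul_of_nonneg_left _ hq.le
          apply Real.log_le_log (by linarith)
          rcases le_total (X q) (Y q) with h | h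
          · rw [max_eq_right h]; linarith
          · rw [max_eq_left h]; linarith
      _ = q * Real.log 2 + q * Real.log (max (X q) (Y q)) := by
          rw [Real.log_mul two_ne_zero (ne_of_gt hmaxpos)]; ring
      _ = _ := by rw [hmaxlog]

/-- Crystallization (`q → 0` limit) of the `q`-Littelmann operators. -/
theorem crystallization_of_q_littelmann
    {V : Type*} [NormedAddCommGroup V] [NormedSpace ℝ V] [FiniteDimensional ℝ V]
    (T : ℝ) (hT : 0 < T)
    (α : V →ₗ[ℝ] ℝ) (αv : V) (hpair : α αv = 2)
    (π : ℝ → V) (hπ : ContinuousOn π (Set.Icc 0 T)) (hπ0 : π 0 = 0)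
    (c : ℝ) :
    Tendsto (fun q : ℝ => q * Real.log (∫ s in (0:ℝ)..T, Real.exp (-α (π s) / q)))
      (𝓝[>] 0) (𝓝 (-sInf ((fun s => α (π s)) '' Set.Icc 0 T))) ∧
    ∀ t : ℝ, 0 < t → t < T →
      Tendsto (fun q : ℝ => π t +
          (q * Real.log (1 + ((Real.exp (c / q) - 1) /
              ∫ s in (0:ℝ)..T, Real.exp (-α (π s) / q)) *
            ∫ s in (0:ℝ)..t, Real.exp (-α (π s) / q))) • αv)
        (𝓝[>] 0)
        (𝓝 (π t + (sInf ((fun s => α (π s)) '' Set.Icc 0 T) -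
            min (sInf ((fun s => α (π s)) '' Set.Icc 0 t) - c)
              (sInf ((fun s => α (π s)) '' Set.Icc t T))) • αv)) := by
  set f : ℝ → ℝ := fun s => α (π s) with hfdef
  have hfc : ContinuousOn f (Set.Icc 0 T) :=
    α.continuous_of_finiteDimensional.comp_continuousOn hπ
  refine ⟨laplace hT hfc, ?_⟩
  intro t ht htT
  have hfc_t : ContinuousOn f (Set.Icc 0 t) := hfc.mono (Set.Icc_subset_Icc le_rfl htT.le)
  have hfc_tT : ContinuousOn f (Set.Icc t T) := hfc.mono (Set.Icc_subset_Icc ht.le le_rfl)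
  set m0T := sInf (f '' Set.Icc 0 T) with hm0T
  set m0t := sInf (f '' Set.Icc 0 t) with hm0t
  set mtT := sInf (f '' Set.Icc t T) with hmtT
  -- the Y-part: q log (exp(c/q) * I_t) → c - m0t
  have hY : Tendsto (fun q : ℝ => q * Real.log
      (Real.exp (c / q) * ∫ s in (0:ℝ)..t, Real.exp (-f s / q)))
      (𝓝[>] (0:ℝ)) (𝓝 (c + -m0t)) := by
    have base := (tendsto_const_nhds (x := c)).add (laplace ht hfc_t)
    apply base.congr'
    filter_upwards [self_mem_nhdsWithin] with q hq
    have hq : (0:ℝ) < q := hq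
    have hIt := lapPos (q := q) ht hfc_t
    rw [Real.log_mul (Real.exp_ne_zero _) (ne_of_gt hIt), Real.log_exp, mul_add,
      mul_div_cancel₀ _ (ne_of_gt hq)]
  have hX : Tendsto (fun q : ℝ => q * Real.log (∫ s in t..T, Real.exp (-f s / q)))
      (𝓝[>] (0:ℝ)) (𝓝 (-mtT)) := laplace htT hfc_tT
  have hsum := qlog_add (X := fun q => ∫ s in t..T, Real.exp (-f s / q))
    (Y := fun q => Real.exp (c / q) * ∫ s in (0:ℝ)..t, Real.exp (-f s / q))
    (fun q hq => lapPos htT hfc_tT)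
    (fun q hq => mul_pos (Real.exp_pos _) (lapPos ht hfc_t))
    hX hY
  -- the scalar part tends to max(-mtT, c - m0t) + m0T
  have hscalar : Tendsto (fun q : ℝ => q * Real.log (1 + ((Real.exp (c / q) - 1) /
        ∫ s in (0:ℝ)..T, Real.exp (-f s / q)) * ∫ s in (0:ℝ)..t, Real.exp (-f s / q)))
      (𝓝[>] (0:ℝ)) (𝓝 (max (-mtT) (c + -m0t) - -m0T)) := by
    have base := hsum.sub (laplace hT hfc)
    apply base.congr'
    filter_upwards [self_mem_nhdsWithin] with q hq
    have hq : (0:ℝ) < q := hq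
    have hIt := lapPos (q := q) ht hfc_t
    have hJ := lapPos (q := q) htT hfc_tT
    have hIT := lapPos (q := q) hT hfc
    have hadd : (∫ s in (0:ℝ)..t, Real.exp (-f s / q)) + ∫ s in t..T, Real.exp (-f s / q)
        = ∫ s in (0:ℝ)..T, Real.exp (-f s / q) :=
      intervalIntegral.integral_add_adjacent_intervals (expInt ht.le hfc_t) (expInt htT.le hfc_tT)
    have hnum : (0:ℝ) < (∫ s in t..T, Real.exp (-f s / q)) +
        Real.exp (c / q) * ∫ s in (0:ℝ)..t, Real.exp (-f s / q) := by positivity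
    have hrw : 1 + ((Real.exp (c / q) - 1) / ∫ s in (0:ℝ)..T, Real.exp (-f s / q)) *
          ∫ s in (0:ℝ)..t, Real.exp (-f s / q)
        = ((∫ s in t..T, Real.exp (-f s / q)) +
            Real.exp (c / q) * ∫ s in (0:ℝ)..t, Real.exp (-f s / q)) /
          ∫ s in (0:ℝ)..T, Real.exp (-f s / q) := by
      have hIT2 := hIT
      rw [← hadd] at hIT2 ⊢
      generalize (∫ s in (0:ℝ)..t, Real.exp (-f s / q)) = A at hIT2 ⊢
      generalize (∫ s in t..T, Real.exp (-f s / q)) = B at hIT2 ⊢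
      rw [eq_div_iff (ne_of_gt hIT2), add_mul, one_mul, div_mul_eq_mul_div,
        div_mul_cancel₀ _ (ne_of_gt hIT2)]
      ring
    rw [← mul_sub, ← Real.log_div (ne_of_gt hnum) (ne_of_gt hIT), ← hrw]
  -- identify the limit value
  have hval : max (-mtT) (c + -m0t) - -m0T = m0T - min (m0t - c) mtT := by
    rcases le_total (m0t - c) mtT with h | h
    · rw [min_eq_left h, max_eq_right (by linarith)]; ring
    · rw [min_eq_right h, max_eq_left (by linarith)]; ring
  rw [hval] at hscalar
  exact (hscalar.smul_const αv).const_add (π t)
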